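/- Fractional Gronwall lemma: let α ∈ (0,1), L ≥ 0, and u : [0,a] → ℝ continuous and nonnegative with u(0) = 0 satisfying u(s) ≤ L · I^α u(s) = L ∫₀^s (s−β)^{α−1}/Γ(α) u(β) dβ for all s ∈ [0,a]. Then u ≡ 0 on [0,a]. -/

import Mathlib

open intervalIntegral

theorem fractional_gronwall (a α L : ℝ) (ha : 0 < a) (hα : 0 < α)
    (hα1 : α < 1) (hL : 0 ≤ L)
    (u : ℝ → ℝ) (huc : ContinuousOn u (Set.Icc 0 a))
    (hupos : ∀ s ∈ Set.Icc (0:ℝ) a, 0 ≤ u s) (hu0 : u 0 = 0)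
    (hineq : ∀ s ∈ Set.Icc (0:ℝ) a,
      u s ≤ L * ∫ β in (0:ℝ)..s, (s - β) ^ (α - 1) / Real.Gamma α * u β) :
    ∀ s ∈ Set.Icc (0:ℝ) a, u s = 0 := by
  have hΓ : 0 < Real.Gamma α := Real.Gamma_pos_of_pos hα
  set G := Real.Gamma α with hGdef
  have hbase : 0 < α * G / (2 * (L + 1)) := by positivity
  set δ : ℝ := (α * G / (2 * (L + 1))) ^ (α⁻¹) with hδdef
  have hδpos : 0 < δ := Real.rpow_pos_of_pos hbase _
  have hδα : δ ^ α = α * G / (2 * (L + 1)) :=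
    Real.rpow_inv_rpow hbase.le hα.ne'
  have key : ∀ n : ℕ, ∀ s ∈ Set.Icc (0:ℝ) a, s ≤ n * δ → u s = 0 := by
    intro n
    induction n with
    | zero =>
      intro s hs hsle
      simp only [Nat.cast_zero, zero_mul] at hsle
      have : s = 0 := le_antisymm hsle hs.1
      rw [this, hu0]
    | succ n IH =>
      intro s hs hsle
      set T : ℝ := n * δ with hTdef
      have hT0 : 0 ≤ T := by positivity
      have hsle' : s ≤ T + δ := by
        rw [hTdef]; push_cast at hsle ⊢; linarith
      by_cases hTa : a ≤ T
      · exact IH s hs (le_trans hs.2 hTa)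
      push_neg at hTa
      set b : ℝ := min (T + δ) a with hbdef
      have hTb : T ≤ b := le_min (by linarith) hTa.le
      have hba : b ≤ a := min_le_right _ _
      have hKsub : Set.Icc T b ⊆ Set.Icc 0 a := fun x hx =>
        ⟨le_trans hT0 hx.1, le_trans hx.2 hba⟩
      obtain ⟨s', hs'K, hmax⟩ :=
        isCompact_Icc.exists_isMaxOn ⟨T, le_refl T, hTb⟩ (huc.mono hKsub)
      set M : ℝ := u s' with hMdef
      have hs'a : s' ∈ Set.Icc (0:ℝ) a := hKsub hs'K
      have hM0 : 0 ≤ M := hupos s' hs'a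
      -- show M = 0
      have hMz : M = 0 := by
        rcases le_or_gt s' T with hcase | hcase
        · exact IH s' hs'a hcase
        -- T < s'
        have hs'0 : 0 ≤ s' := hs'a.1
        have hker : IntervalIntegrable (fun β => (s' - β) ^ (α - 1)) MeasureTheory.volume 0 s' := by
          have h1 : IntervalIntegrable (fun x : ℝ => x ^ (α - 1)) MeasureTheory.volume 0 s' :=
            intervalIntegrable_rpow' (by linarith)
          have h2 := h1.comp_sub_left s'
          simp only [sub_self, sub_zero] at h2
          exact h2.symm
        have hucs : ContinuousOn u (Set.uIcc 0 s') := by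
          apply huc.mono
          rw [Set.uIcc_of_le hs'0]
          exact fun x hx => ⟨hx.1, le_trans hx.2 hs'a.2⟩
        have hk_int : IntervalIntegrable
            (fun β => (s' - β) ^ (α - 1) / G * u β) MeasureTheory.volume 0 s' :=
          (hker.div_const G).mul_continuousOn hucs
        have hTmem : T ∈ Set.uIcc (0:ℝ) s' := by
          rw [Set.uIcc_of_le hs'0]; exact ⟨hT0, hcase.le⟩
        have hsub1 : Set.uIcc (0:ℝ) T ⊆ Set.uIcc 0 s' :=
          Set.uIcc_subset_uIcc Set.left_mem_uIcc hTmem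
        have hsub2 : Set.uIcc T s' ⊆ Set.uIcc 0 s' :=
          Set.uIcc_subset_uIcc hTmem Set.right_mem_uIcc
        have hint1 := hk_int.mono_set hsub1
        have hint2 := hk_int.mono_set hsub2
        have hsplit : (∫ β in (0:ℝ)..s', (s' - β) ^ (α - 1) / G * u β)
            = (∫ β in (0:ℝ)..T, (s' - β) ^ (α - 1) / G * u β)
              + ∫ β in T..s', (s' - β) ^ (α - 1) / G * u β :=
          (integral_add_adjacent_intervals hint1 hint2).symm
        have hzero : (∫ β in (0:ℝ)..T, (s' - β) ^ (α - 1) / G * u β) = 0 := by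
          rw [intervalIntegral.integral_congr (g := fun _ => (0:ℝ))]
          · simp
          · intro β hβ
            rw [Set.uIcc_of_le hT0] at hβ
            have : u β = 0 := IH β ⟨hβ.1, le_trans hβ.2 (le_of_lt hTa)⟩ hβ.2
            simp [this]
        -- bound the second integral
        have hkerT : IntervalIntegrable (fun β => (s' - β) ^ (α - 1)) MeasureTheory.volume T s' := by
          have := hker.mono_set (Set.uIcc_subset_uIcc hTmem Set.right_mem_uIcc)
          exact this
        have hint2' : IntervalIntegrable (fun β => (s' - β) ^ (α - 1) / G * M)
            MeasureTheory.volume T s' := (hkerT.div_const G).mul_const M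
        have hbound : (∫ β in T..s', (s' - β) ^ (α - 1) / G * u β)
            ≤ ∫ β in T..s', (s' - β) ^ (α - 1) / G * M := by
          apply intervalIntegral.integral_mono_on hcase.le hint2 hint2'
          intro β hβ
          have hker0 : 0 ≤ (s' - β) ^ (α - 1) / G := by
            apply div_nonneg _ hΓ.le
            exact Real.rpow_nonneg (by linarith [hβ.2]) _
          apply mul_le_mul_of_nonneg_left _ hker0
          exact hmax ⟨hβ.1, le_trans hβ.2 hs'K.2⟩
        have hcalc : (∫ β in T..s', (s' - β) ^ (α - 1) / G * M)
            = (s' - T) ^ α / α / G * M := by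
          rw [intervalIntegral.integral_mul_const, intervalIntegral.integral_div]
          congr 1
          have hcomp : (∫ β in T..s', (s' - β) ^ (α - 1))
              = ∫ x in (s' - s')..(s' - T), x ^ (α - 1) :=
            intervalIntegral.integral_comp_sub_left (fun x => x ^ (α - 1)) s'
          rw [hcomp]
          rw [sub_self, integral_rpow (Or.inl (by linarith))]
          rw [Real.zero_rpow (by linarith : α - 1 + 1 ≠ 0)]
          rw [sub_add_cancel]
          ring
        have hstTδ : s' - T ≤ δ := by
          have : s' ≤ T + δ := le_trans hs'K.2 (min_le_left _ _)
          linarith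
        have hpow_le : (s' - T) ^ α ≤ δ ^ α :=
          Real.rpow_le_rpow (by linarith) hstTδ hα.le
        have hMle : M ≤ L * ((s' - T) ^ α / α / G * M) := by
          have h1 := hineq s' hs'a
          rw [hGdef] at hsplit hzero hbound hcalc
          rw [hsplit, hzero, zero_add] at h1
          calc M ≤ L * ∫ β in T..s', (s' - β) ^ (α - 1) / Real.Gamma α * u β := h1
            _ ≤ L * ((s' - T) ^ α / α / Real.Gamma α * M) := by
                apply mul_le_mul_of_nonneg_left _ hL
                rw [← hcalc]; exact hbound
        have hfinal : L * ((s' - T) ^ α / α / G * M) ≤ M / 2 := by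
          have h2 : L * ((s' - T) ^ α / α / G * M) ≤ L * (δ ^ α / α / G * M) := by
            apply mul_le_mul_of_nonneg_left _ hL
            apply mul_le_mul_of_nonneg_right _ hM0
            gcongr
          have h3 : L * (δ ^ α / α / G * M) = L / (2 * (L + 1)) * M := by
            rw [hδα]; field_simp
          have h4 : L / (2 * (L + 1)) ≤ 1 / 2 := by
            rw [div_le_div_iff₀ (by positivity) (by norm_num)]
            nlinarith
          calc L * ((s' - T) ^ α / α / G * M) ≤ L / (2 * (L + 1)) * M := by rw [← h3]; exact h2
            _ ≤ 1 / 2 * M := mul_le_mul_of_nonneg_right h4 hM0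
            _ = M / 2 := by ring
        linarith [le_trans hMle hfinal]
      -- conclude u s = 0
      rcases le_or_gt s T with hsT | hsT
      · exact IH s hs hsT
      · have hsK : s ∈ Set.Icc T b := ⟨hsT.le, le_min hsle' hs.2⟩
        have h1 : u s ≤ M := hmax hsK
        have h0 := hupos s hs
        linarith
  intro s hs
  obtain ⟨n, hn⟩ := exists_nat_ge (s / δ)
  exact key n s hs ((div_le_iff₀ hδpos).mp hn)
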